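/- (Choi–Hellwig–Kraus theorem.) Let Φ : Matrix (Fin n) (Fin n) ℂ →ₗ[ℂ] Matrix (Fin n) (Fin n) ℂ be a linear map. Then the Choi matrix Ch Φ is positive semidefinite if and only if Φ is completely positive. -/

import Mathlib

open Matrix ComplexOrder

/-- `Φ` is completely positive: every blockwise application of `Φ` to a positive semidefinite
matrix on `ℂ^m ⊗ ℂ^n` yields a positive semidefinite matrix. -/
def IsCP (n : ℕ) (Φ : Matrix (Fin n) (Fin n) ℂ →ₗ[ℂ] Matrix (Fin n) (Fin n) ℂ) : Prop :=
  ∀ (m : ℕ) (A : Matrix (Fin m × Fin n) (Fin m × Fin n) ℂ), A.PosSemidef →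
    (Matrix.of fun p q : Fin m × Fin n =>
      Φ (Matrix.of fun i' j' => A (p.1, i') (q.1, j')) p.2 q.2).PosSemidef

/-- The Choi matrix of `Φ`: `Ch Φ ((i, j), (k, l)) = Φ (E i k) j l`. -/
def Ch (n : ℕ) (Φ : Matrix (Fin n) (Fin n) ℂ →ₗ[ℂ] Matrix (Fin n) (Fin n) ℂ) :
    Matrix (Fin n × Fin n) (Fin n × Fin n) ℂ :=
  Matrix.of fun p q => Φ (Matrix.single p.1 q.1 1) p.2 q.2

lemma sum2_collapse {α β : Type*} [Fintype α] [Fintype β] (f : α → β → ℂ) :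
    (∑ a, ∑ b, f a b) = ∑ z : α × β, f z.1 z.2 := by
  simp [Fintype.sum_prod_type]

lemma sum4_collapse {α β γ δ : Type*} [Fintype α] [Fintype β] [Fintype γ] [Fintype δ]
    (f : α → β → γ → δ → ℂ) :
    (∑ a, ∑ b, ∑ c, ∑ d, f a b c d) = ∑ z : α × β × γ × δ, f z.1 z.2.1 z.2.2.1 z.2.2.2 := by
  simp [Fintype.sum_prod_type]

lemma phi_expand (n : ℕ) (Φ : Matrix (Fin n) (Fin n) ℂ →ₗ[ℂ] Matrix (Fin n) (Fin n) ℂ)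
    (X : Matrix (Fin n) (Fin n) ℂ) (i j : Fin n) :
    Φ X i j = ∑ c : Fin n × Fin n, X c.1 c.2 * Ch n Φ (c.1, i) (c.2, j) := by
  conv_lhs => rw [matrix_eq_sum_single X]
  rw [map_sum, Matrix.sum_apply, Fintype.sum_prod_type]
  refine Finset.sum_congr rfl fun a _ => ?_
  rw [map_sum, Matrix.sum_apply]
  refine Finset.sum_congr rfl fun b _ => ?_
  have h1 : single a b (X a b) = X a b • single a b 1 := by
    rw [smul_single, smul_eq_mul, mul_one]
  rw [h1, Φ.map_smul, Matrix.smul_apply, smul_eq_mul]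
  rfl

/-- Choi–Hellwig–Kraus theorem: the Choi matrix of `Φ` is positive semidefinite iff `Φ` is
completely positive. -/
theorem choi_hellwig_kraus (n : ℕ)
    (Φ : Matrix (Fin n) (Fin n) ℂ →ₗ[ℂ] Matrix (Fin n) (Fin n) ℂ) :
    (Ch n Φ).PosSemidef ↔ IsCP n Φ := by
  constructor
  · intro hc m A hA
    open MatrixOrder in
    obtain ⟨B, hB⟩ := CStarAlgebra.nonneg_iff_eq_star_mul_self.mp hA.nonneg
    have hAentry : ∀ u v, A u v = ∑ r, star (B r u) * B r v := by
      intro u v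
      rw [hB, Matrix.mul_apply]
      simp [star_eq_conjTranspose, Matrix.conjTranspose_apply]
    have hM : ∀ p q : Fin m × Fin n,
        Φ (Matrix.of fun i' j' => A (p.1, i') (q.1, j')) p.2 q.2
        = ∑ c : Fin n × Fin n, A (p.1, c.1) (q.1, c.2) * Ch n Φ (c.1, p.2) (c.2, q.2) := by
      intro p q
      simpa using phi_expand n Φ (Matrix.of fun i' j' => A (p.1, i') (q.1, j')) p.2 q.2
    refine posSemidef_iff_dotProduct_mulVec.mpr ⟨?_, ?_⟩
    · ext p q
      rw [Matrix.conjTranspose_apply, Matrix.of_apply, Matrix.of_apply, hM, hM]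
      rw [star_sum]
      refine Fintype.sum_equiv (Equiv.prodComm _ _) _ _ fun c => ?_
      rw [star_mul', hA.1.apply, hc.1.apply]
      simp [mul_comm]
    · intro x
      set y : (Fin m × Fin n) → (Fin n × Fin n) → ℂ :=
        fun r a => ∑ t : Fin m, B r (t, a.1) * x (t, a.2) with hy
      have key : star x ⬝ᵥ ((Matrix.of fun p q : Fin m × Fin n =>
          Φ (Matrix.of fun i' j' => A (p.1, i') (q.1, j')) p.2 q.2) *ᵥ x)
          = ∑ r, star (y r) ⬝ᵥ (Ch n Φ *ᵥ y r) := by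
        have lhs_nested : star x ⬝ᵥ ((Matrix.of fun p q : Fin m × Fin n =>
            Φ (Matrix.of fun i' j' => A (p.1, i') (q.1, j')) p.2 q.2) *ᵥ x)
            = ∑ p : Fin m × Fin n, ∑ q : Fin m × Fin n, ∑ c : Fin n × Fin n,
              ∑ r : Fin m × Fin n,
              star (x p) * (star (B r (p.1, c.1)) * B r (q.1, c.2)
                * Ch n Φ (c.1, p.2) (c.2, q.2)) * x q := by
          simp only [dotProduct, Matrix.mulVec, Matrix.of_apply, Pi.star_apply, hM]
          simp only [hAentry, Finset.sum_mul, Finset.mul_sum]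
          refine Finset.sum_congr rfl fun p _ => Finset.sum_congr rfl fun q _ =>
            Finset.sum_congr rfl fun c _ => Finset.sum_congr rfl fun r _ => by ring
        have rhs_nested : ∀ r, star (y r) ⬝ᵥ (Ch n Φ *ᵥ y r)
            = ∑ a : Fin n × Fin n, ∑ b : Fin n × Fin n, ∑ s : Fin m, ∑ t : Fin m,
              star (B r (t, a.1)) * star (x (t, a.2))
                * Ch n Φ a b * (B r (s, b.1) * x (s, b.2)) := by
          intro r
          simp only [dotProduct, Matrix.mulVec, Pi.star_apply, hy, star_sum, star_mul',
            Finset.sum_mul, Finset.mul_sum]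
          refine Finset.sum_congr rfl fun a _ => Finset.sum_congr rfl fun b _ =>
            Finset.sum_congr rfl fun s _ => Finset.sum_congr rfl fun t _ => by ring
        rw [lhs_nested, sum4_collapse]
        simp only [rhs_nested]
        simp only [sum4_collapse]
        rw [sum2_collapse]
        refine (Fintype.sum_equiv
          (⟨fun w => ((w.2.2.2.2, w.2.1.2), ((w.2.2.2.1, w.2.2.1.2), ((w.2.1.1, w.2.2.1.1), w.1))),
            fun z => (z.2.2.2, ((z.2.2.1.1, z.1.2), ((z.2.2.1.2, z.2.1.2), (z.2.1.1, z.1.1)))),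
            fun _ => rfl, fun _ => rfl⟩ :
            ((Fin m × Fin n) × (Fin n × Fin n) × (Fin n × Fin n) × Fin m × Fin m)
              ≃ ((Fin m × Fin n) × (Fin m × Fin n) × (Fin n × Fin n) × (Fin m × Fin n)))
          _ _ fun w => ?_).symm
        dsimp only [Equiv.coe_fn_mk]
        ring
      rw [key]
      exact Finset.sum_nonneg fun r _ => hc.dotProduct_mulVec_nonneg (y r)
  · intro hCP
    set B : Matrix (Fin 1) (Fin n × Fin n) ℂ :=
      Matrix.of fun _ p => if p.1 = p.2 then 1 else 0 with hBdef
    have hPSD := posSemidef_conjTranspose_mul_self B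
    have h := hCP n (Bᴴ * B) hPSD
    have heq : (Matrix.of fun p q : Fin n × Fin n =>
        Φ (Matrix.of fun i' j' => (Bᴴ * B) (p.1, i') (q.1, j')) p.2 q.2) = Ch n Φ := by
      refine Matrix.ext fun p q => ?_
      rw [Matrix.of_apply]
      show Φ _ p.2 q.2 = Φ (single p.1 q.1 1) p.2 q.2
      have hinner : (Matrix.of fun i' j' => (Bᴴ * B) (p.1, i') (q.1, j'))
          = single p.1 q.1 1 := by
        refine Matrix.ext fun i' j' => ?_
        simp only [Matrix.of_apply, Matrix.mul_apply, Matrix.conjTranspose_apply, hBdef,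
          Matrix.single, Fin.sum_univ_one]
        split_ifs <;> simp_all
      rw [hinner]
    rw [← heq]
    exact h
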